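/- Let A, B, p > 0 and let y : ℝ → ℝ be differentiable on [0,∞) with y(t) > 0 and deriv y t ≤ A·y(t) − B·y(t)^{1+p} for all t ≥ 0. Then for every t > 0, y(t) ≤ e^{A t}·(p·B·t)^{−1/p}. -/

import Mathlib

/-- Nash-iteration ODE step in the heat-kernel bound (Theorem C.1): if `y > 0` on `[0,∞)`
satisfies `y' ≤ A y - B y^{1+p}`, then `y(t) ≤ e^{At} (pBt)^{-1/p}` for all `t > 0`. -/
theorem nash_ode_bound
    (A B p : ℝ) (hA : 0 < A) (hB : 0 < B) (hp : 0 < p)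
    (y : ℝ → ℝ)
    (hy : ∀ t ∈ Set.Ici (0 : ℝ), DifferentiableAt ℝ y t)
    (hypos : ∀ t ∈ Set.Ici (0 : ℝ), 0 < y t)
    (hode : ∀ t ∈ Set.Ici (0 : ℝ), deriv y t ≤ A * y t - B * (y t) ^ (1 + p)) :
    ∀ t : ℝ, 0 < t → y t ≤ Real.exp (A * t) * (p * B * t) ^ (-1 / p) := by
  intro t ht
  set g : ℝ → ℝ := fun s => (y s) ^ (-p) * Real.exp (p * A * s) with hg
  -- derivative of g
  have hgd : ∀ s ∈ Set.Ici (0 : ℝ),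
      HasDerivAt g (deriv y s * (-p) * (y s) ^ (-p - 1) * Real.exp (p * A * s)
        + (y s) ^ (-p) * (Real.exp (p * A * s) * (p * A))) s := by
    intro s hs
    have h1 : HasDerivAt (fun u => (y u) ^ (-p)) (deriv y s * (-p) * (y s) ^ (-p - 1)) s :=
      (hy s hs).hasDerivAt.rpow_const (Or.inl (hypos s hs).ne')
    have h2 : HasDerivAt (fun u => Real.exp (p * A * u)) (Real.exp (p * A * s) * (p * A)) s := by
      simpa [mul_comm] using (((hasDerivAt_id s).const_mul (p * A)).exp)
    exact h1.mul h2
  -- the derivative of g is at least p*B on [0,∞)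
  have hgd_ge : ∀ s ∈ Set.Ici (0 : ℝ),
      p * B ≤ deriv y s * (-p) * (y s) ^ (-p - 1) * Real.exp (p * A * s)
        + (y s) ^ (-p) * (Real.exp (p * A * s) * (p * A)) := by
    intro s hs
    have hys := hypos s hs
    have hAs : (0 : ℝ) ≤ p * A * s := by
      have hs' : (0:ℝ) ≤ s := hs
      positivity
    have hexp1 : (1 : ℝ) ≤ Real.exp (p * A * s) := Real.one_le_exp hAs
    have hkey : p * B ≤ deriv y s * (-p) * (y s) ^ (-p - 1) + (y s) ^ (-p) * (p * A) := by
      have h0 : B * (y s) ^ (1 + p) ≤ A * y s - deriv y s := by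
        have := hode s hs; linarith
      have hpow : (y s) ^ (-p) = (y s) ^ (-p - 1) * y s := by
        have h := (Real.rpow_add hys (-p - 1) 1).symm
        rw [Real.rpow_one] at h
        rw [h]; congr 1; ring
      have hpos1 : (0 : ℝ) < (y s) ^ (-p - 1) := Real.rpow_pos_of_pos hys _
      have hmul : (y s) ^ (-p - 1) * (B * (y s) ^ (1 + p))
          ≤ (y s) ^ (-p - 1) * (A * y s - deriv y s) :=
        mul_le_mul_of_nonneg_left h0 hpos1.le
      have hone : (y s) ^ (-p - 1) * (y s) ^ (1 + p) = 1 := by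
        rw [← Real.rpow_add hys, show -p - 1 + (1 + p) = (0:ℝ) by ring, Real.rpow_zero]
      have hB' : (y s) ^ (-p - 1) * (B * (y s) ^ (1 + p)) = B := by
        rw [mul_comm B, ← mul_assoc, hone, one_mul]
      have h3 : B ≤ (y s) ^ (-p - 1) * (A * y s - deriv y s) := hB' ▸ hmul
      have h4 := mul_le_mul_of_nonneg_left h3 hp.le
      calc p * B ≤ p * ((y s) ^ (-p - 1) * (A * y s - deriv y s)) := h4
        _ = deriv y s * (-p) * (y s) ^ (-p - 1) + ((y s) ^ (-p - 1) * y s) * (p * A) := by ring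
        _ = deriv y s * (-p) * (y s) ^ (-p - 1) + (y s) ^ (-p) * (p * A) := by rw [← hpow]
    have hexp0 : (0 : ℝ) < Real.exp (p * A * s) := Real.exp_pos _
    have h5 := mul_le_mul_of_nonneg_right hkey hexp0.le
    have h6 : p * B * 1 ≤ p * B * Real.exp (p * A * s) :=
      mul_le_mul_of_nonneg_left hexp1 (mul_pos hp hB).le
    calc p * B = p * B * 1 := by ring
      _ ≤ p * B * Real.exp (p * A * s) := h6
      _ ≤ (deriv y s * (-p) * (y s) ^ (-p - 1) + (y s) ^ (-p) * (p * A))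
            * Real.exp (p * A * s) := h5
      _ = deriv y s * (-p) * (y s) ^ (-p - 1) * Real.exp (p * A * s)
            + (y s) ^ (-p) * (Real.exp (p * A * s) * (p * A)) := by ring
  -- h := g - p*B*t is monotone on [0,∞)
  set h : ℝ → ℝ := fun s => g s - p * B * s with hh
  have hhd : ∀ s ∈ Set.Ici (0 : ℝ),
      HasDerivAt h (deriv y s * (-p) * (y s) ^ (-p - 1) * Real.exp (p * A * s)
        + (y s) ^ (-p) * (Real.exp (p * A * s) * (p * A)) - p * B) s := by
    intro s hs
    exact (hgd s hs).sub (((hasDerivAt_id s).const_mul (p * B)).congr_deriv (by simp))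
  have hmono : MonotoneOn h (Set.Ici (0 : ℝ)) := by
    apply monotoneOn_of_deriv_nonneg (convex_Ici 0)
    · intro s hs
      exact ((hhd s hs).differentiableAt).continuousAt.continuousWithinAt
    · intro s hs
      rw [interior_Ici] at hs
      exact ((hhd s (Set.mem_Ici.mpr (le_of_lt hs))).differentiableAt).differentiableWithinAt
    · intro s hs
      rw [interior_Ici] at hs
      rw [(hhd s (Set.mem_Ici.mpr hs.le)).deriv]
      have := hgd_ge s (Set.mem_Ici.mpr hs.le)
      linarith
  have h0t : h 0 ≤ h t := hmono Set.self_mem_Ici ht.le ht.le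
  have hg0 : 0 < g 0 := by
    have h1 := hypos 0 Set.self_mem_Ici
    have := Real.rpow_pos_of_pos h1 (-p)
    simp only [hg]
    positivity
  have hgt : p * B * t ≤ g t := by
    simp only [hh] at h0t
    simp only [mul_zero, sub_zero] at h0t
    linarith
  -- now convert
  have hyt := hypos t ht.le
  have hpbt : (0 : ℝ) < p * B * t := by positivity
  have hrpow : (g t) ^ (-1 / p) ≤ (p * B * t) ^ (-1 / p) := by
    apply Real.rpow_le_rpow_of_nonpos hpbt hgt
    apply div_nonpos_of_nonpos_of_nonneg <;> linarith
  have hgt_eval : (g t) ^ (-1 / p) = y t * Real.exp (-(A * t)) := by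
    simp only [hg]
    rw [Real.mul_rpow (Real.rpow_pos_of_pos hyt _).le (Real.exp_pos _).le,
      ← Real.rpow_mul hyt.le, ← Real.exp_mul,
      show -p * (-1 / p) = 1 by field_simp,
      show p * A * t * (-1 / p) = -(A * t) by field_simp,
      Real.rpow_one]
  rw [hgt_eval] at hrpow
  have hexp : (0:ℝ) < Real.exp (A * t) := Real.exp_pos _
  calc y t = (y t * Real.exp (-(A * t))) * Real.exp (A * t) := by
        rw [mul_assoc, ← Real.exp_add]; simp
    _ ≤ (p * B * t) ^ (-1 / p) * Real.exp (A * t) :=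
        mul_le_mul_of_nonneg_right hrpow hexp.le
    _ = Real.exp (A * t) * (p * B * t) ^ (-1 / p) := by ring
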